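/- Let k ≥ 1, m, n be natural numbers with m ≥ 2k and n ≥ 2k. For Lebesgue-almost every matrix A ∈ ℝ^{m×n} the following holds: for every pair of disjoint index sets I, J ⊆ {1, …, n} with |I| = |J| = k and every sign vector ε ∈ {-1, +1}^m, the m×2k matrix M whose first k columns are the columns of A indexed by I and whose last k columns are the columns of diag(ε)·A indexed by J has rank 2k (full column rank). -/

import Mathlib

open MeasureTheory Matrix

section Aux

private lemma volume_pi_congr {ι : Type*} (i1 i2 : Fintype ι) :
    (@volume (ι → ℝ) (@MeasureSpace.pi ι i1 (fun _ => ℝ) fun _ => Real.measureSpace))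
    = (@volume (ι → ℝ) (@MeasureSpace.pi ι i2 (fun _ => ℝ) fun _ => Real.measureSpace)) := by
  obtain rfl := Subsingleton.elim i1 i2
  rfl

private lemma MP_congr {α β : Type*} [MeasurableSpace α] [MeasurableSpace β] {f : α → β}
    {μ μ' : Measure α} {ν ν' : Measure β} (h : MeasurePreserving f μ ν)
    (hμ : μ = μ') (hν : ν = ν') : MeasurePreserving f μ' ν' := hμ ▸ hν ▸ h

variable {m : ℕ}

/-- The Gram determinant of a finite family of vectors in `ℝ^m` vanishes iff the family is
linearly dependent. -/
lemma gram_det_eq_zero_iff {ι : Type*} [Fintype ι] [DecidableEq ι] (W : ι → Fin m → ℝ) :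
    (Matrix.of fun a b => ∑ i, W a i * W b i).det = 0 ↔ ¬ LinearIndependent ℝ W := by
  classical
  set B : Matrix (Fin m) ι ℝ := Matrix.of fun i a => W a i with hB
  have hG : (Matrix.of fun a b => ∑ i, W a i * W b i) = Bᵀ * B := by
    ext a b
    simp [Matrix.mul_apply, hB]
  have hker := Matrix.ker_mulVecLin_transpose_mul_self B
  have hmv : ∀ v, (Bᵀ * B) *ᵥ v = 0 ↔ B *ᵥ v = 0 := by
    intro v
    have h1 : ((Bᵀ * B) *ᵥ v = 0) ↔ v ∈ LinearMap.ker (Bᵀ * B).mulVecLin := by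
      rw [LinearMap.mem_ker, Matrix.mulVecLin_apply]
    have h2 : (B *ᵥ v = 0) ↔ v ∈ LinearMap.ker B.mulVecLin := by
      rw [LinearMap.mem_ker, Matrix.mulVecLin_apply]
    rw [h1, h2, hker]
  rw [hG, ← Matrix.exists_mulVec_eq_zero_iff, Fintype.not_linearIndependent_iff]
  constructor
  · rintro ⟨v, hv, hmul⟩
    refine ⟨v, ?_, ?_⟩
    · rw [hmv] at hmul
      funext i
      have := congrFun hmul i
      simpa [Matrix.mulVec, dotProduct, hB, Finset.sum_apply, mul_comm] using this
    · rwa [Function.ne_iff] at hv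
  · rintro ⟨g, hsum, i₀, hi₀⟩
    refine ⟨g, ?_, ?_⟩
    · rw [Function.ne_iff]; exact ⟨i₀, hi₀⟩
    · rw [hmv]
      funext i
      have := congrFun hsum i
      simpa [Matrix.mulVec, dotProduct, hB, Finset.sum_apply, mul_comm] using this

/-- Linear dependence of a measurably-varying finite family of vectors in `ℝ^m` is a
measurable condition. -/
lemma measurableSet_not_linearIndependent {X : Type*} [MeasurableSpace X] {ι : Type*} [Fintype ι]
    [DecidableEq ι] (V : X → ι → Fin m → ℝ) (hV : ∀ a i, Measurable fun x => V x a i) :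
    MeasurableSet {x | ¬ LinearIndependent ℝ (V x)} := by
  classical
  have h1 : {x | ¬ LinearIndependent ℝ (V x)}
      = (fun x => (Matrix.of fun a b => ∑ i, V x a i * V x b i).det) ⁻¹' {0} := by
    ext x
    simp [← gram_det_eq_zero_iff (W := V x)]
  rw [h1]
  have hdet : Measurable fun x => (Matrix.of fun a b => ∑ i, V x a i * V x b i).det := by
    simp_rw [Matrix.det_apply']
    refine Finset.measurable_sum _ fun σ _ => Measurable.const_mul ?_ _
    refine Finset.measurable_prod _ fun a _ => ?_
    simp only [Matrix.of_apply]
    exact Finset.measurable_sum _ fun i _ => (hV _ i).mul (hV _ i)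
  exact hdet (measurableSet_singleton 0)

/-- A matrix has full column rank iff its columns are linearly independent. -/
lemma matrix_rank_eq_card_iff {ι : Type*} [Fintype ι] (B : Matrix (Fin m) ι ℝ) :
    B.rank = Fintype.card ι ↔ LinearIndependent ℝ (fun j (i : Fin m) => B i j) := by
  rw [Matrix.rank_eq_finrank_span_cols, linearIndependent_iff_card_eq_finrank_span]
  rw [eq_comm]
  rfl

/-- Core lemma: for `r ≤ m` and any injective selection of `r` columns, with arbitrary
`±1` sign patterns, almost every `A` yields linearly independent (sign-modified) columns. -/
lemma coreX (m : ℕ) : ∀ (r : ℕ), r ≤ m →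
    ∀ (κ : Type) (_ : Fintype κ) (_ : DecidableEq κ) (c : Fin r → κ), Function.Injective c →
    ∀ (sg : Fin r → Fin m → ℝ), (∀ p i, sg p i = 1 ∨ sg p i = -1) →
    volume {A : Fin m → κ → ℝ |
      ¬ LinearIndependent ℝ (fun p (i : Fin m) => sg p i * A i (c p))} = 0 := by
  intro r
  induction r with
  | zero =>
    intro _ κ _ _ c _ sg _
    have h : {A : Fin m → κ → ℝ |
        ¬ LinearIndependent ℝ (fun p (i : Fin m) => sg p i * A i (c p))} = ∅ := by
      ext A
      simp [linearIndependent_empty_type]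
    simp [h]
  | succ r IH =>
    intro hrm κ _ _ c hc sg hsg
    classical
    set c0 : κ := c 0 with hc0
    letI instU : Unique {j : κ // j = c0} := ⟨⟨⟨c0, rfl⟩⟩, fun a => Subtype.ext a.2⟩
    letI instF : Fintype {j : κ // j = c0} := Unique.fintype
    set κ' := {j : κ // ¬ j = c0} with hκ'
    have hcne : ∀ p : Fin r, ¬ c p.succ = c0 := by
      intro p h
      exact Fin.succ_ne_zero p (hc h)
    set c' : Fin r → κ' := fun p => ⟨c p.succ, hcne p⟩ with hc'def
    have hc' : Function.Injective c' := by
      intro p q h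
      have : c p.succ = c q.succ := congrArg Subtype.val h
      exact Fin.succ_injective _ (hc this)
    -- the measure-preserving splitting map
    set F : (Fin m → κ → ℝ) → (Fin m → κ' → ℝ) × (Fin m → ℝ) :=
      fun A => (fun i j => A i j.1, fun i => A i c0) with hFdef
    have hF : MeasurePreserving F volume volume := by
      have h1 := volume_preserving_piEquivPiSubtypeProd (fun _ : κ => ℝ) (fun j => j = c0)
      rw [Measure.volume_eq_prod] at h1
      have h3 := volume_preserving_funUnique {j : κ // j = c0} ℝ
      have h4' : MeasurePreserving
          (fun g : κ → ℝ => (g c0, fun j : κ' => g j.1)) volume volume := by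
        rw [Measure.volume_eq_prod]
        have h4'' := MeasurePreserving.comp
          (MP_congr (h3.prod (MeasurePreserving.id (volume : Measure (κ' → ℝ))))
            (by congr 1; exact volume_pi_congr _ _) rfl) h1
        exact h4''
      have h5 : MeasurePreserving
          (fun (A : Fin m → κ → ℝ) (i : Fin m) => ((A i) c0, fun j : κ' => A i j.1))
          volume volume := volume_preserving_pi (fun _ => h4')
      have h6 := (volume_measurePreserving_arrowProdEquivProdArrow ℝ (κ' → ℝ) (Fin m)).comp h5
      have hswap : MeasurePreserving (Prod.swap :
            (Fin m → ℝ) × (Fin m → κ' → ℝ) → (Fin m → κ' → ℝ) × (Fin m → ℝ))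
          volume volume := by
        rw [Measure.volume_eq_prod, Measure.volume_eq_prod]
        exact Measure.measurePreserving_swap
      exact hswap.comp h6
    -- the bad set in the product space
    set famC : (Fin m → κ' → ℝ) × (Fin m → ℝ) → Fin (r + 1) → Fin m → ℝ :=
      fun q => Fin.cons (fun i => sg 0 i * q.2 i)
        (fun p i => sg p.succ i * q.1 i (c' p)) with hfamC
    set C : Set ((Fin m → κ' → ℝ) × (Fin m → ℝ)) :=
      {q | ¬ LinearIndependent ℝ (famC q)} with hCdef
    have hCmeas : MeasurableSet C := by
      refine measurableSet_not_linearIndependent famC (fun a i => ?_)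
      refine Fin.cases ?_ ?_ a
      · simp only [hfamC, Fin.cons_zero]
        exact Measurable.const_mul (Measurable.eval measurable_snd) _
      · intro q
        simp only [hfamC, Fin.cons_succ]
        have hm1 : Measurable fun z : (Fin m → κ' → ℝ) × (Fin m → ℝ) => z.1 i :=
          measurable_fst.eval
        have hm2 : Measurable fun z : (Fin m → κ' → ℝ) × (Fin m → ℝ) => z.1 i (c' q) :=
          hm1.eval
        exact hm2.const_mul _
    have hBadF : {A : Fin m → κ → ℝ |
        ¬ LinearIndependent ℝ (fun p (i : Fin m) => sg p i * A i (c p))} = F ⁻¹' C := by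
      ext A
      simp only [Set.mem_setOf_eq, Set.mem_preimage, hCdef]
      have hfam : famC (F A) = fun p (i : Fin m) => sg p i * A i (c p) := by
        funext p
        refine Fin.cases ?_ ?_ p
        · simp [hfamC, hFdef, hc0]
        · intro q
          simp [hfamC, hFdef, hc'def]
      rw [hfam]
    -- the inductive bad set
    set Bad' : Set (Fin m → κ' → ℝ) :=
      {B | ¬ LinearIndependent ℝ (fun p (i : Fin m) => sg p.succ i * B i (c' p))} with hBad'def
    have hBad'0 : volume Bad' = 0 :=
      IH (Nat.le_of_succ_le hrm) κ' inferInstance inferInstance c' hc'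
        (fun p => sg p.succ) (fun p i => hsg p.succ i)
    have hBad'meas : MeasurableSet Bad' := by
      refine measurableSet_not_linearIndependent _ (fun p i => ?_)
      have hm1 : Measurable fun B : Fin m → κ' → ℝ => B i := measurable_pi_apply i
      have hm2 : Measurable fun B : Fin m → κ' → ℝ => B i (c' p) := hm1.eval
      exact hm2.const_mul _
    -- Fubini
    have hprodC : (volume : Measure ((Fin m → κ' → ℝ) × (Fin m → ℝ))) C = 0 := by
      rw [Measure.volume_eq_prod]
      have hsplit : C ⊆ (Bad' ×ˢ Set.univ) ∪ (C ∩ (Bad'ᶜ ×ˢ Set.univ)) := by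
        intro q hq
        by_cases hB : q.1 ∈ Bad'
        · exact Or.inl ⟨hB, trivial⟩
        · exact Or.inr ⟨hq, hB, trivial⟩
      refine le_antisymm ?_ (by simp)
      refine le_trans (measure_mono hsplit) ?_
      refine le_trans (measure_union_le _ _) ?_
      have h1 : ((volume : Measure (Fin m → κ' → ℝ)).prod (volume : Measure (Fin m → ℝ)))
          (Bad' ×ˢ Set.univ) = 0 := by
        rw [Measure.prod_prod, hBad'0, zero_mul]
      have h2 : ((volume : Measure (Fin m → κ' → ℝ)).prod (volume : Measure (Fin m → ℝ)))
          (C ∩ (Bad'ᶜ ×ˢ Set.univ)) = 0 := by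
        have hDmeas : MeasurableSet (C ∩ (Bad'ᶜ ×ˢ Set.univ)) :=
          hCmeas.inter (hBad'meas.compl.prod MeasurableSet.univ)
        rw [Measure.measure_prod_null hDmeas]
        refine Filter.Eventually.of_forall (fun B => ?_)
        show volume (Prod.mk B ⁻¹' (C ∩ (Bad'ᶜ ×ˢ Set.univ))) = 0
        by_cases hB : LinearIndependent ℝ (fun p (i : Fin m) => sg p.succ i * B i (c' p))
        · -- slice is contained in a proper subspace
          set S : Submodule ℝ (Fin m → ℝ) :=
            Submodule.span ℝ (Set.range (fun p (i : Fin m) => sg p.succ i * B i (c' p)))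
            with hSdef
          have hSne : S ≠ ⊤ := by
            intro htop
            have hfin : Module.finrank ℝ S ≤ r := by
              have h1 : Module.finrank ℝ S ≤
                  (Set.range (fun p (i : Fin m) => sg p.succ i * B i (c' p))).toFinset.card :=
                finrank_span_le_card _
              refine le_trans h1 ?_
              rw [Set.toFinset_range]
              exact le_trans Finset.card_image_le (by simp)
            rw [htop, finrank_top] at hfin
            have : Module.finrank ℝ (Fin m → ℝ) = m := by
              simp [Module.finrank_fin_fun]
            omega
          -- the scaling linear map
          set Lw : (Fin m → ℝ) →ₗ[ℝ] (Fin m → ℝ) :=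
            LinearMap.pi (fun i => sg 0 i • LinearMap.proj i) with hLwdef
          have hLw : ∀ x i, Lw x i = sg 0 i * x i := by
            intro x i
            simp [hLwdef]
          have hLinv : ∀ x, Lw (Lw x) = x := by
            intro x
            funext i
            rw [hLw, hLw]
            rcases hsg 0 i with h | h <;> rw [h] <;> ring
          have hcomapne : Submodule.comap Lw S ≠ ⊤ := by
            intro htop
            apply hSne
            rw [Submodule.eq_top_iff']
            intro y
            have h1 : Lw y ∈ Submodule.comap Lw S := htop ▸ Submodule.mem_top
            have h2 : Lw (Lw y) ∈ S := h1
            rwa [hLinv] at h2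
          have hkey : ∀ x : Fin m → ℝ, (¬ LinearIndependent ℝ (famC (B, x))) ↔ Lw x ∈ S := by
            intro x
            have hfam2 : famC (B, x) = Fin.cons (fun i => sg 0 i * x i)
                (fun p (i : Fin m) => sg p.succ i * B i (c' p)) := rfl
            have hwx : (fun i => sg 0 i * x i) = Lw x := by
              funext i
              rw [hLw]
            rw [hfam2, hwx, linearIndependent_fin_cons]
            constructor
            · intro h
              by_contra hnot
              exact h ⟨hB, hnot⟩
            · intro hmem hcons
              exact hcons.2 hmem
          have hslice : Prod.mk B ⁻¹' (C ∩ (Bad'ᶜ ×ˢ Set.univ))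
              = (Submodule.comap Lw S : Set (Fin m → ℝ)) := by
            ext x
            constructor
            · rintro ⟨hxC, -, -⟩
              exact Submodule.mem_comap.mpr ((hkey x).mp hxC)
            · intro hx
              refine ⟨(hkey x).mpr (Submodule.mem_comap.mp hx), ?_, trivial⟩
              exact fun hbad => hbad hB
          rw [hslice]
          exact Measure.addHaar_submodule _ _ hcomapne
        · -- slice is empty
          have hslice : Prod.mk B ⁻¹' (C ∩ (Bad'ᶜ ×ˢ Set.univ)) = ∅ := by
            ext x
            simp only [Set.mem_preimage, Set.mem_inter_iff, Set.mem_prod, Set.mem_compl_iff,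
              hBad'def, Set.mem_setOf_eq, Set.mem_univ, and_true, Set.mem_empty_iff_false,
              iff_false, not_and]
            intro _ h
            exact absurd hB h
          simp [hslice]
      rw [h1, h2, add_zero]
    rw [hBadF]
    rw [hF.measure_preimage hCmeas.nullMeasurableSet]
    exact hprodC

end Aux

/-- For `m ≥ 2k` and `n ≥ 2k`, for Lebesgue-almost every real `m × n` matrix `A`:
for all disjoint index sets `I, J` of size `k` and every sign vector `ε ∈ {±1}^m`,
the `m × 2k` matrix `[A_I | diag(ε)·A_J]` has full column rank `2k`. -/
theorem disjoint_support_full_rank_ae (k m n : ℕ) (hk : 1 ≤ k)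
    (hm : 2 * k ≤ m) (hn : 2 * k ≤ n) :
    ∀ᵐ A : Fin m → Fin n → ℝ,
      ∀ (I J : Finset (Fin n)) (hI : I.card = k) (hJ : J.card = k),
        Disjoint I J →
        ∀ ε : Fin m → ℝ, (∀ i, ε i = 1 ∨ ε i = -1) →
          (Matrix.of fun (i : Fin m) (j : Fin k ⊕ Fin k) =>
            Sum.elim (fun a => A i (I.orderEmbOfFin hI a))
                     (fun b => ε i * A i (J.orderEmbOfFin hJ b)) j).rank = 2 * k := by
  classical
  have key : ∀ (I J : Finset (Fin n)) (hI : I.card = k) (hJ : J.card = k), Disjoint I J →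
      ∀ s : Finset (Fin m), ∀ᵐ A : Fin m → Fin n → ℝ,
        (Matrix.of fun (i : Fin m) (j : Fin k ⊕ Fin k) =>
          Sum.elim (fun a => A i (I.orderEmbOfFin hI a))
                   (fun b => (if i ∈ s then (-1 : ℝ) else 1) * A i (J.orderEmbOfFin hJ b)) j).rank
          = 2 * k := by
    intro I J hI hJ hd s
    set ε : Fin m → ℝ := fun i => if i ∈ s then -1 else 1 with hεdef
    set c : Fin (k + k) → Fin n := fun p =>
      Sum.elim (fun a => I.orderEmbOfFin hI a) (fun b => J.orderEmbOfFin hJ b)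
        (finSumFinEquiv.symm p) with hcdef
    have hc : Function.Injective c := by
      have helim : Function.Injective
          (Sum.elim (fun a => I.orderEmbOfFin hI a) (fun b => (J.orderEmbOfFin hJ b : Fin n))) := by
        refine Function.Injective.sumElim ?_ ?_ ?_
        · exact fun a b h => (I.orderEmbOfFin hI).injective h
        · exact fun a b h => (J.orderEmbOfFin hJ).injective h
        · intro a b h
          have h1 : (I.orderEmbOfFin hI a : Fin n) ∈ I := Finset.orderEmbOfFin_mem I hI a
          have h2 : (J.orderEmbOfFin hJ b : Fin n) ∈ J := Finset.orderEmbOfFin_mem J hJ b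
          rw [h] at h1
          exact (Finset.disjoint_left.mp hd h1) h2
      exact helim.comp finSumFinEquiv.symm.injective
    set sg : Fin (k + k) → Fin m → ℝ := fun p i =>
      Sum.elim (fun _ => (1 : ℝ)) (fun _ => ε i) (finSumFinEquiv.symm p) with hsgdef
    have hsg : ∀ p i, sg p i = 1 ∨ sg p i = -1 := by
      intro p i
      simp only [hsgdef]
      rcases finSumFinEquiv.symm p with a | b
      · exact Or.inl rfl
      · simp only [Sum.elim_inr, hεdef]
        by_cases h : i ∈ s
        · exact Or.inr (by simp [h])
        · exact Or.inl (by simp [h])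
    have h0 := coreX m (k + k) (by omega) (Fin n) inferInstance inferInstance c hc sg hsg
    rw [ae_iff]
    have hset : {A : Fin m → Fin n → ℝ |
        ¬ (Matrix.of fun (i : Fin m) (j : Fin k ⊕ Fin k) =>
          Sum.elim (fun a => A i (I.orderEmbOfFin hI a))
                   (fun b => (if i ∈ s then (-1 : ℝ) else 1) * A i (J.orderEmbOfFin hJ b)) j).rank
          = 2 * k}
        = {A : Fin m → Fin n → ℝ |
            ¬ LinearIndependent ℝ (fun p (i : Fin m) => sg p i * A i (c p))} := by
      ext A
      simp only [Set.mem_setOf_eq]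
      apply not_congr
      have h2k : 2 * k = Fintype.card (Fin k ⊕ Fin k) := by simp [two_mul]
      rw [h2k, matrix_rank_eq_card_iff]
      have hfam : (fun p (i : Fin m) => sg p i * A i (c p)) =
          (fun (j : Fin k ⊕ Fin k) (i : Fin m) =>
            (Matrix.of fun (i : Fin m) (j : Fin k ⊕ Fin k) =>
              Sum.elim (fun a => A i (I.orderEmbOfFin hI a))
                (fun b => (if i ∈ s then (-1 : ℝ) else 1) * A i (J.orderEmbOfFin hJ b)) j) i j)
            ∘ finSumFinEquiv.symm := by
        funext p i
        simp only [Function.comp_apply, Matrix.of_apply, hsgdef, hcdef, hεdef]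
        rcases finSumFinEquiv.symm p with a | b
        · simp
        · simp
      have hLI := linearIndependent_equiv (R := ℝ) (finSumFinEquiv.symm)
        (f := fun (j : Fin k ⊕ Fin k) (i : Fin m) =>
          (Matrix.of fun (i : Fin m) (j : Fin k ⊕ Fin k) =>
            Sum.elim (fun a => A i (I.orderEmbOfFin hI a))
              (fun b => (if i ∈ s then (-1 : ℝ) else 1) * A i (J.orderEmbOfFin hJ b)) j) i j)
      rw [hfam]
      exact hLI.symm
    rw [hset]
    exact h0
  have big : ∀ᵐ A : Fin m → Fin n → ℝ,
      ∀ (I J : Finset (Fin n)) (s : Finset (Fin m)) (hI : I.card = k) (hJ : J.card = k),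
        Disjoint I J →
        (Matrix.of fun (i : Fin m) (j : Fin k ⊕ Fin k) =>
          Sum.elim (fun a => A i (I.orderEmbOfFin hI a))
                   (fun b => (if i ∈ s then (-1 : ℝ) else 1) * A i (J.orderEmbOfFin hJ b)) j).rank
          = 2 * k := by
    rw [ae_all_iff]
    intro I
    rw [ae_all_iff]
    intro J
    rw [ae_all_iff]
    intro s
    by_cases hI : I.card = k
    · by_cases hJ : J.card = k
      · by_cases hd : Disjoint I J
        · filter_upwards [key I J hI hJ hd s] with A h hI' hJ' hd'
          exact h
        · filter_upwards with A hI' hJ' hd'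
          exact absurd hd' hd
      · filter_upwards with A hI' hJ'
        exact absurd hJ' hJ
    · filter_upwards with A hI'
      exact absurd hI' hI
  filter_upwards [big] with A hA
  intro I J hI hJ hd ε hε
  set s : Finset (Fin m) := Finset.univ.filter (fun i => ε i = -1) with hsdef
  have hεs : ε = fun i => if i ∈ s then (-1 : ℝ) else 1 := by
    funext i
    rcases hε i with h | h <;> simp [hsdef, h] <;> norm_num
  rw [hεs]
  exact hA I J s hI hJ hd
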